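/- Let d ≥ 2, let Λ be a finite-index subgroup of ℤ^d such that every nonzero v ∈ Λ has Σᵢ|vᵢ| ≥ 3 (so the induced rook-adjacency graph on ℤ^d/Λ is simple), and let P be a nonempty proper subset of ℤ^d/Λ, connected under rook adjacency, with n cells whose complement has h connected components. Then d·h ≤ (d−1)·n + 1, i.e. h ≤ ((d−1)/d)·n + 1/d. -/

import Mathlib

/-- A set `S` is connected under an adjacency relation: it is nonempty and any two
of its elements are joined by a path staying inside `S`. -/
def ConnectedIn {α : Type*} (adj : α → α → Prop) (S : Set α) : Prop :=
  S.Nonempty ∧ ∀ x ∈ S, ∀ y ∈ S,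
    Relation.ReflTransGen (fun a b => adj a b ∧ a ∈ S ∧ b ∈ S) x y

/-- Rook adjacency induced on the discrete torus `ℤ^d/Λ`: two classes are adjacent
iff they admit representatives at `ℓ¹`-distance 1. -/
def torusAdj (d : ℕ) (Λ : AddSubgroup (Fin d → ℤ)) (a b : (Fin d → ℤ) ⧸ Λ) : Prop :=
  ∃ x y : Fin d → ℤ, (QuotientAddGroup.mk x : (Fin d → ℤ) ⧸ Λ) = a ∧
    (QuotientAddGroup.mk y : (Fin d → ℤ) ⧸ Λ) = b ∧ (∑ i, |x i - y i|) = 1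


/-- auxiliary: a vector with ℓ¹ norm 1 is a signed standard basis vector -/
lemma aux_l1_one {d : ℕ} (v : Fin d → ℤ) (hv : ∑ i, |v i| = 1) :
    ∃ i, v = Pi.single i 1 ∨ v = -Pi.single i 1 := by
  classical
  have hnz : ∃ i, v i ≠ 0 := by
    by_contra hcon
    push_neg at hcon
    simp [hcon] at hv
  obtain ⟨i, hi⟩ := hnz
  have h1 : |v i| ≤ 1 := by
    rw [← hv]
    exact Finset.single_le_sum (fun j _ => abs_nonneg (v j)) (Finset.mem_univ i)
  have h2 : 1 ≤ |v i| := by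
    have := abs_pos.mpr hi
    omega
  have hvi : |v i| = 1 := le_antisymm h1 h2
  have hrest : ∀ j, j ≠ i → v j = 0 := by
    intro j hj
    have hsplit := Finset.add_sum_erase Finset.univ (fun k => |v k|) (Finset.mem_univ i)
    have hs : ∑ k ∈ Finset.univ.erase i, |v k| = 0 := by
      omega
    have := Finset.sum_eq_zero_iff_of_nonneg (fun k _ => abs_nonneg (v k)) |>.mp hs j
      (Finset.mem_erase.mpr ⟨hj, Finset.mem_univ j⟩)
    exact abs_eq_zero.mp this
  rcases abs_eq (by norm_num : (0:ℤ) ≤ 1) |>.mp hvi with h | h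
  · exact ⟨i, Or.inl (by ext j; by_cases hj : j = i <;> simp [hj, Pi.single_apply, h, hrest j])⟩
  · exact ⟨i, Or.inr (by ext j; by_cases hj : j = i <;> simp [hj, Pi.single_apply, h, hrest j])⟩


/-- auxiliary: in a connected graph, every vertex other than `x₀` has a neighbor
strictly closer to `x₀`. -/
lemma aux_parent {V : Type*} {G : SimpleGraph V} (hc : G.Connected) (x₀ : V)
    (y : V) (hy : y ≠ x₀) : ∃ z : V, G.Adj y z ∧ G.dist z x₀ < G.dist y x₀ := by
  obtain ⟨w, hw⟩ := hc.exists_walk_length_eq_dist y x₀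
  have hpos : 0 < G.dist y x₀ := hc.pos_dist_of_ne hy
  cases w with
  | nil => exact absurd rfl hy
  | cons h w' =>
    refine ⟨_, h, ?_⟩
    have := SimpleGraph.dist_le w'
    simp [SimpleGraph.Walk.length_cons] at hw
    omega


/-- auxiliary edge-isoperimetric inequality on a finite abelian group:
a nonempty proper subset has at least `2 * d` boundary pairs with respect to a
generating family with all `±ε i` distinct. -/
lemma aux_iso {G : Type*} [AddCommGroup G] [Fintype G] [DecidableEq G] {d : ℕ}
    (ε : Fin d → G)
    (hgen : ∀ g : G, g ∈ AddSubgroup.closure (Set.range ε))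
    (hinj : Function.Injective (fun is : Fin d × Bool => cond is.2 (ε is.1) (-ε is.1)))
    (C : Finset G) (hCne : C.Nonempty) (hCuniv : C ≠ Finset.univ) :
    2 * d ≤ ∑ is : Fin d × Bool,
      (C.filter fun q => q + (cond is.2 (ε is.1) (-ε is.1)) ∉ C).card := by
  classical
  set b : G → ℕ := fun g => (C.filter fun q => q + g ∉ C).card with hb
  -- the subgroup of translations preserving C
  let K : AddSubgroup G :=
  { carrier := {g | ∀ q, q ∈ C ↔ q + g ∈ C}
    zero_mem' := by intro q; simp
    add_mem' := by
      intro a c ha hc q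
      rw [ha q, hc (q + a), add_assoc]
    neg_mem' := by
      intro a ha q
      have := ha (q + -a)
      simp only [neg_add_cancel_right] at this
      exact this.symm }
  have hKmem : ∀ g : G, g ∈ K ↔ ∀ q, q ∈ C ↔ q + g ∈ C := fun g => Iff.rfl
  have hKzero : ∀ g : G, b g = 0 → g ∈ K := by
    intro g hg
    have hemp : C.filter (fun q => q + g ∉ C) = ∅ := Finset.card_eq_zero.mp hg
    have hsub : ∀ q ∈ C, q + g ∈ C := by
      intro q hq
      by_contra hcon
      have : q ∈ C.filter (fun q => q + g ∉ C) := Finset.mem_filter.mpr ⟨hq, hcon⟩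
      simp [hemp] at this
    have himg : C.image (· + g) = C := by
      apply Finset.eq_of_subset_of_card_le
      · intro x hx
        obtain ⟨c, hc, rfl⟩ := Finset.mem_image.mp hx
        exact hsub c hc
      · rw [Finset.card_image_of_injective _ (add_left_injective g)]
    intro q
    constructor
    · exact hsub q
    · intro hqg
      rw [← himg] at hqg
      obtain ⟨c, hc, hcq⟩ := Finset.mem_image.mp hqg
      have : c = q := add_right_cancel hcq
      rwa [← this]
  have hKneg : ∀ g : G, g ∈ K → b g = 0 := by
    intro g hg
    rw [hb]
    simp only [Finset.card_eq_zero]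
    apply Finset.filter_eq_empty_iff.mpr
    intro q hq
    simp only [not_not]
    exact ((hKmem g).mp hg q).mp hq
  set T : Finset (Fin d) := Finset.univ.filter (fun i => b (ε i) = 0) with hT
  set t : ℕ := T.card with ht
  have hTK : ∀ i ∈ T, ε i ∈ K := by
    intro i hi
    exact hKzero _ (Finset.mem_filter.mp hi).2
  by_cases hTuniv : T = Finset.univ
  · exfalso
    apply hCuniv
    have hallK : ∀ g : G, g ∈ K := by
      intro g
      refine (AddSubgroup.closure_le K).mpr ?_ (hgen g)
      rintro _ ⟨i, rfl⟩
      exact hTK i (hTuniv ▸ Finset.mem_univ i)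
    obtain ⟨q₀, hq₀⟩ := hCne
    apply Finset.eq_univ_iff_forall.mpr
    intro x
    have := ((hKmem _).mp (hallK (x - q₀)) q₀).mp hq₀
    rwa [add_sub_cancel] at this
  · -- proper case
    have htlt : t < d := by
      have h1 : T ⊂ Finset.univ := Finset.ssubset_univ_iff.mpr hTuniv
      have := Finset.card_lt_card h1
      simpa using this
    set H : AddSubgroup G := AddSubgroup.closure ((T.image ε : Finset G) : Set G) with hH
    have hHK : H ≤ K := by
      apply (AddSubgroup.closure_le K).mpr
      intro g hg
      simp only [Finset.coe_image, Set.mem_image, Finset.mem_coe] at hg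
      obtain ⟨i, hi, rfl⟩ := hg
      exact hTK i hi
    set Hf : Finset G := (H : Set G).toFinset with hHf
    -- distinctness facts
    have hne0 : ∀ i, ε i ≠ 0 := by
      intro i hcon
      have : (fun is : Fin d × Bool => cond is.2 (ε is.1) (-ε is.1)) (i, true) =
          (fun is : Fin d × Bool => cond is.2 (ε is.1) (-ε is.1)) (i, false) := by
        simp [hcon]
      simpa using congrArg Prod.snd (hinj this)
    have hεinj : Function.Injective ε := by
      intro i j hij
      have : (fun is : Fin d × Bool => cond is.2 (ε is.1) (-ε is.1)) (i, true) =
          (fun is : Fin d × Bool => cond is.2 (ε is.1) (-ε is.1)) (j, true) := by simpa using hij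
      exact congrArg Prod.fst (hinj this)
    have hmix : ∀ i j, ε i ≠ -ε j := by
      intro i j hcon
      have : (fun is : Fin d × Bool => cond is.2 (ε is.1) (-ε is.1)) (i, true) =
          (fun is : Fin d × Bool => cond is.2 (ε is.1) (-ε is.1)) (j, false) := by simpa using hcon
      simpa using congrArg Prod.snd (hinj this)
    -- lower bound on the size of H
    have hcardH : 2 * t + 1 ≤ Hf.card := by
      have hsub : insert 0 (T.image ε ∪ T.image (fun i => -ε i)) ⊆ Hf := by
        intro x hx
        rw [hHf, Set.mem_toFinset]
        rcases Finset.mem_insert.mp hx with rfl | hx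
        · exact zero_mem H
        rcases Finset.mem_union.mp hx with hx | hx
        · exact AddSubgroup.subset_closure (by simpa using hx)
        · obtain ⟨i, hi, rfl⟩ := Finset.mem_image.mp hx
          exact neg_mem (AddSubgroup.subset_closure (by
            simp only [Finset.coe_image, Set.mem_image, Finset.mem_coe]
            exact ⟨i, hi, rfl⟩))
      have hcard : (insert 0 (T.image ε ∪ T.image (fun i => -ε i))).card = 2 * t + 1 := by
        rw [Finset.card_insert_of_notMem, Finset.card_union_of_disjoint]
        · rw [Finset.card_image_of_injective _ hεinj,
            Finset.card_image_of_injective _ (fun i j hij => hεinj (neg_injective hij))]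
          omega
        · rw [Finset.disjoint_left]
          intro x hx hx'
          obtain ⟨i, _, rfl⟩ := Finset.mem_image.mp hx
          obtain ⟨j, _, hj⟩ := Finset.mem_image.mp hx'
          exact hmix i j hj.symm
        · intro hcon
          rcases Finset.mem_union.mp hcon with hx | hx
          · obtain ⟨i, _, hi⟩ := Finset.mem_image.mp hx
            exact hne0 i hi
          · obtain ⟨i, _, hi⟩ := Finset.mem_image.mp hx
            exact hne0 i (neg_eq_zero.mp hi)
      rw [← hcard]
      exact Finset.card_le_card hsub
    -- each non-invariant direction contributes at least |H| in each sign
    have hDlow : ∀ g : G, b g ≠ 0 → Hf.card ≤ b g := by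
      intro g hbg
      obtain ⟨q₀, hq₀⟩ := Finset.card_ne_zero.mp hbg
      have hinv : ∀ x ∈ Hf, q₀ + x ∈ C.filter (fun q => q + g ∉ C) := by
        intro x hx
        rw [hHf, Set.mem_toFinset] at hx
        have hxK := hHK hx
        obtain ⟨hq₀C, hq₀g⟩ := Finset.mem_filter.mp hq₀
        refine Finset.mem_filter.mpr ⟨((hKmem x).mp hxK q₀).mp hq₀C, ?_⟩
        intro hcon
        apply hq₀g
        rw [add_right_comm] at hcon
        exact ((hKmem x).mp hxK (q₀ + g)).mpr hcon
      calc Hf.card = (Hf.image (fun x => q₀ + x)).card :=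
            (Finset.card_image_of_injective _ (add_right_injective q₀)).symm
        _ ≤ b g := by
            apply Finset.card_le_card
            intro y hy
            obtain ⟨x, hx, rfl⟩ := Finset.mem_image.mp hy
            exact hinv x hx
    -- both signs are nonzero off T
    have hboth : ∀ j, j ∉ T → b (ε j) ≠ 0 ∧ b (-ε j) ≠ 0 := by
      intro j hj
      have h1 : b (ε j) ≠ 0 := by
        intro hcon
        exact hj (Finset.mem_filter.mpr ⟨Finset.mem_univ j, hcon⟩)
      refine ⟨h1, ?_⟩
      intro hcon
      exact h1 (hKneg _ (neg_neg (ε j) ▸ neg_mem (hKzero _ hcon)))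
    -- sum over all directions
    have hsum : ∑ is : Fin d × Bool, b (cond is.2 (ε is.1) (-ε is.1)) =
        ∑ i : Fin d, (b (ε i) + b (-ε i)) := by
      rw [Fintype.sum_prod_type]
      apply Finset.sum_congr rfl
      intro i _
      simp [Fintype.sum_bool]
      try omega
    have hlow : ∀ i ∈ Finset.univ \ T, 2 * (2 * t + 1) ≤ b (ε i) + b (-ε i) := by
      intro i hi
      have hiT : i ∉ T := (Finset.mem_sdiff.mp hi).2
      obtain ⟨h1, h2⟩ := hboth i hiT
      have := hDlow _ h1
      have := hDlow _ h2
      omega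
    have hcards : (Finset.univ \ T).card = d - t := by
      rw [Finset.card_sdiff_of_subset (Finset.subset_univ T)]
      simp [ht]
    have hstep : (d - t) * (2 * (2 * t + 1)) ≤ ∑ i : Fin d, (b (ε i) + b (-ε i)) := by
      calc (d - t) * (2 * (2 * t + 1)) = ∑ _i ∈ Finset.univ \ T, 2 * (2 * t + 1) := by
            rw [Finset.sum_const, smul_eq_mul, hcards]
        _ ≤ ∑ i ∈ Finset.univ \ T, (b (ε i) + b (-ε i)) := Finset.sum_le_sum hlow
        _ ≤ ∑ i : Fin d, (b (ε i) + b (-ε i)) :=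
            Finset.sum_le_sum_of_subset (Finset.sdiff_subset)
    have harith : 2 * d ≤ (d - t) * (2 * (2 * t + 1)) := by
      have h1 : 1 ≤ d - t := by omega
      have h2 : d - t + t = d := by omega
      nlinarith [h1, h2]
    calc 2 * d ≤ (d - t) * (2 * (2 * t + 1)) := harith
      _ ≤ ∑ i : Fin d, (b (ε i) + b (-ε i)) := hstep
      _ = ∑ is : Fin d × Bool, b (cond is.2 (ε is.1) (-ε is.1)) := hsum.symm
      _ = _ := rfl

set_option maxHeartbeats 1000000 in
/-- A toric polyomino with `n` cells in `ℤ^d/Λ` whose complement has `h` connected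
components (holes) satisfies `d·h ≤ (d−1)·n + 1`. The hypothesis that every nonzero
`v ∈ Λ` has `ℓ¹`-norm at least 3 ensures the induced rook-adjacency graph is simple.
The number of connected components of the complement is the cardinality of the quotient
of `Pᶜ` by the equivalence relation generated by rook adjacency. -/
theorem toric_polyomino_holes_upper_bound (d : ℕ) (hd : 2 ≤ d)
    (Λ : AddSubgroup (Fin d → ℤ)) (hfin : Λ.index ≠ 0)
    (hshort : ∀ v ∈ Λ, v ≠ 0 → 3 ≤ ∑ i, |v i|)
    (P : Set ((Fin d → ℤ) ⧸ Λ)) (hne : P.Nonempty) (hprop : P ≠ Set.univ)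
    (hconn : ConnectedIn (torusAdj d Λ) P)
    (n h : ℕ) (hn : P.ncard = n)
    (hh : Nat.card (Quot fun a b : ↥(Pᶜ) => torusAdj d Λ a.1 b.1) = h) :
    d * h ≤ (d - 1) * n + 1 := by
  classical
  have hfinite : Finite ((Fin d → ℤ) ⧸ Λ) := by
    have hcard : Nat.card ((Fin d → ℤ) ⧸ Λ) ≠ 0 := by
      rwa [← AddSubgroup.index_eq_card]
    exact (Nat.card_ne_zero.mp hcard).2
  haveI : Fintype ((Fin d → ℤ) ⧸ Λ) := Fintype.ofFinite _
  set E : Fin d → (Fin d → ℤ) := fun i => Pi.single i 1 with hE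
  set ε : Fin d → (Fin d → ℤ) ⧸ Λ := fun i => QuotientAddGroup.mk (E i) with hε
  set W : Fin d × Bool → (Fin d → ℤ) := fun is => cond is.2 (E is.1) (-E is.1) with hW
  set sv : Fin d × Bool → (Fin d → ℤ) ⧸ Λ := fun is => cond is.2 (ε is.1) (-ε is.1) with hsv
  have hEnorm : ∀ i, ∑ k, |E i k| = 1 := by
    intro i
    simp [hE, Pi.single_apply, apply_ite (abs : ℤ → ℤ)]
  have hWnorm : ∀ is, ∑ k, |W is k| = 1 := by
    rintro ⟨i, s⟩
    cases s <;> simp [hW, hEnorm i]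
  have hWmk : ∀ is, (QuotientAddGroup.mk (W is) : (Fin d → ℤ) ⧸ Λ) = sv is := by
    rintro ⟨i, s⟩
    cases s <;> simp [hW, hsv, hε]
  have hsmall : ∀ v : Fin d → ℤ, v ∈ Λ → (∑ k, |v k|) ≤ 2 → v = 0 := by
    intro v hv hle
    by_contra hcon
    have := hshort v hv hcon
    omega
  have hsv_inj : Function.Injective sv := by
    intro is is' heq
    have hmk : (QuotientAddGroup.mk (W is) : (Fin d → ℤ) ⧸ Λ) = QuotientAddGroup.mk (W is') := by
      rw [hWmk, hWmk, heq]
    have hmem : W is - W is' ∈ Λ := QuotientAddGroup.eq_iff_sub_mem.mp hmk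
    have hnorm : (∑ k, |W is k - W is' k|) ≤ 2 := by
      calc (∑ k, |W is k - W is' k|) ≤ ∑ k, (|W is k| + |W is' k|) :=
            Finset.sum_le_sum (fun k _ => abs_sub _ _)
        _ = 2 := by rw [Finset.sum_add_distrib, hWnorm, hWnorm]; norm_num
    have hzero : W is - W is' = 0 := hsmall _ hmem hnorm
    have hWeq : W is = W is' := sub_eq_zero.mp hzero
    obtain ⟨i, s⟩ := is
    obtain ⟨j, s'⟩ := is'
    cases s <;> cases s' <;> simp only [hW, hE, cond_true, cond_false] at hWeq
    · -- -E i = -E j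
      have hij : i = j := by
        by_contra hji
        have hc := congrFun hWeq i
        simp [Pi.single_apply, hji, Ne.symm hji] at hc
      simp [hij]
    · -- -E i = E j
      exfalso
      have hc := congrFun hWeq i
      by_cases hji : i = j
      · subst hji
        simp [Pi.single_apply] at hc
      · simp [Pi.single_apply, hji, Ne.symm hji] at hc
    · -- E i = -E j
      exfalso
      have hc := congrFun hWeq i
      by_cases hji : i = j
      · subst hji
        simp [Pi.single_apply] at hc
      · simp [Pi.single_apply, hji, Ne.symm hji] at hc
    · have hij : i = j := by
        by_contra hji
        have hc := congrFun hWeq i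
        simp [Pi.single_apply, hji, Ne.symm hji] at hc
      simp [hij]
  have hadj_iff : ∀ a b : (Fin d → ℤ) ⧸ Λ, torusAdj d Λ a b ↔ ∃ is, b = a + sv is := by
    intro a b
    constructor
    · rintro ⟨x, y, rfl, rfl, hxy⟩
      obtain ⟨i, hv | hv⟩ := aux_l1_one (fun k => x k - y k) hxy
      · refine ⟨(i, false), ?_⟩
        have hy : y = x + (-E i) := by
          funext k
          have := congrFun hv k
          simp only [hE] at this ⊢
          simp only [Pi.add_apply, Pi.neg_apply]
          omega
        rw [hy]
        have : (QuotientAddGroup.mk (x + -E i) : (Fin d → ℤ) ⧸ Λ) =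
            QuotientAddGroup.mk x + QuotientAddGroup.mk (-E i) := rfl
        rw [this]
        simp [hsv, hε]
      · refine ⟨(i, true), ?_⟩
        have hy : y = x + E i := by
          funext k
          have := congrFun hv k
          simp only [hE] at this ⊢
          simp only [Pi.add_apply, Pi.neg_apply] at this ⊢
          omega
        rw [hy]
        have : (QuotientAddGroup.mk (x + E i) : (Fin d → ℤ) ⧸ Λ) =
            QuotientAddGroup.mk x + QuotientAddGroup.mk (E i) := rfl
        rw [this]
        simp [hsv, hε]
    · rintro ⟨is, rfl⟩
      obtain ⟨x, rfl⟩ := QuotientAddGroup.mk_surjective a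
      refine ⟨x, x + W is, rfl, ?_, ?_⟩
      · have : (QuotientAddGroup.mk (x + W is) : (Fin d → ℤ) ⧸ Λ) =
            QuotientAddGroup.mk x + QuotientAddGroup.mk (W is) := rfl
        rw [this, hWmk]
      · have : ∀ k, x k - (x + W is) k = -(W is k) := by intro k; simp
        simp only [this, abs_neg]
        exact hWnorm is
  have hadj_symm : ∀ a b : (Fin d → ℤ) ⧸ Λ, torusAdj d Λ a b → torusAdj d Λ b a := by
    rintro a b ⟨x, y, hx, hy, hxy⟩
    refine ⟨y, x, hy, hx, ?_⟩
    simp only [abs_sub_comm]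
    exact hxy
  have hsv0 : ∀ is, sv is ≠ 0 := by
    rintro ⟨i, s⟩ hcon
    have hε0 : ε i = 0 := by
      cases s
      · simp only [hsv, cond_false] at hcon
        exact neg_eq_zero.mp hcon
      · simpa only [hsv, cond_true] using hcon
    have heq : sv (i, true) = sv (i, false) := by
      simp [hsv, hε0]
    have := hsv_inj heq
    simp at this
  have hgen : ∀ g : (Fin d → ℤ) ⧸ Λ, g ∈ AddSubgroup.closure (Set.range ε) := by
    intro g
    obtain ⟨x, rfl⟩ := QuotientAddGroup.mk_surjective g
    have hx : x = ∑ i, x i • E i := by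
      funext k
      simp [hE, Finset.sum_apply, Pi.single_apply]
    rw [hx]
    have hmk : (QuotientAddGroup.mk (∑ i, x i • E i) : (Fin d → ℤ) ⧸ Λ) =
        ∑ i, x i • ε i := by
      rw [← QuotientAddGroup.mk'_apply, map_sum]
      refine Finset.sum_congr rfl (fun i _ => ?_)
      rw [map_zsmul, QuotientAddGroup.mk'_apply]
    rw [hmk]
    exact AddSubgroup.sum_mem _ (fun i _ =>
      AddSubgroup.zsmul_mem _ (AddSubgroup.subset_closure (Set.mem_range_self i)) _)
  -- finset version of P
  set Pf : Finset ((Fin d → ℤ) ⧸ Λ) := Set.toFinset P with hPfdef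
  have hPf : ∀ x, x ∈ Pf ↔ x ∈ P := fun x => Set.mem_toFinset
  have hnPf : Pf.card = n := by rw [← hn, Set.ncard_eq_toFinset_card']
  have hn1 : 1 ≤ n := by
    obtain ⟨x₀, hx₀⟩ := hne
    have : x₀ ∈ Pf := (hPf x₀).mpr hx₀
    have := Finset.card_pos.mpr ⟨x₀, this⟩
    omega
  -- ordered adjacent pairs with first coordinate in P
  set A : Finset (((Fin d → ℤ) ⧸ Λ) × ((Fin d → ℤ) ⧸ Λ)) :=
    Finset.univ.filter (fun z => z.1 ∈ Pf ∧ torusAdj d Λ z.1 z.2) with hAdef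
  set I : Finset (((Fin d → ℤ) ⧸ Λ) × ((Fin d → ℤ) ⧸ Λ)) :=
    A.filter (fun z => z.2 ∈ Pf) with hIdef
  set B : Finset (((Fin d → ℤ) ⧸ Λ) × ((Fin d → ℤ) ⧸ Λ)) :=
    A.filter (fun z => z.2 ∉ Pf) with hBdef
  have hIB : I.card + B.card = A.card := by
    have hres := Finset.card_filter_add_card_filter_not
      (s := A) (p := fun z => z.2 ∈ Pf)
    simpa using hres
  have hcardA : A.card = n * (2 * d) := by
    rw [Finset.card_eq_sum_card_fiberwise
      (f := fun z => z.1) (t := Pf)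
      (fun z hz => ((Finset.mem_filter.mp hz).2).1)]
    have hfib : ∀ p ∈ Pf, (A.filter fun z => z.1 = p).card = 2 * d := by
      intro p hp
      have himg : A.filter (fun z => z.1 = p) =
          Finset.univ.image (fun is : Fin d × Bool => (p, p + sv is)) := by
        ext z
        simp only [hAdef, Finset.mem_filter, Finset.mem_univ, true_and, Finset.mem_image]
        constructor
        · rintro ⟨⟨hp1, hadj⟩, h1⟩
          obtain ⟨is, his⟩ := (hadj_iff z.1 z.2).mp hadj
          exact ⟨is, by rw [← h1]; ext <;> simp [his]⟩
        · rintro ⟨is, rfl⟩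
          exact ⟨⟨hp, (hadj_iff _ _).mpr ⟨is, rfl⟩⟩, rfl⟩
      rw [himg, Finset.card_image_of_injective _ ?_, ]
      · simp [Fintype.card_prod]
        ring
      · intro is is' hiseq
        have := congrArg Prod.snd hiseq
        simp only at this
        exact hsv_inj (add_left_cancel this)
    rw [Finset.sum_congr rfl hfib, Finset.sum_const, smul_eq_mul, hnPf]
  -- lower bound on internal pairs via connectivity
  have hcardI : 2 * (n - 1) ≤ I.card := by
    set SP : SimpleGraph ↥P :=
      { Adj := fun a b => (a : (Fin d → ℤ) ⧸ Λ) ≠ (b : (Fin d → ℤ) ⧸ Λ) ∧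
          torusAdj d Λ a b
        symm := by
          constructor
          rintro a b ⟨h1, h2⟩
          exact ⟨h1.symm, hadj_symm _ _ h2⟩
        loopless := by
          constructor
          rintro a ⟨h1, _⟩
          exact h1 rfl } with hSP
    have hSPconn : SP.Connected := by
      have key : ∀ x y : (Fin d → ℤ) ⧸ Λ,
          Relation.ReflTransGen (fun a b => torusAdj d Λ a b ∧ a ∈ P ∧ b ∈ P) x y →
          ∀ (hx : x ∈ P) (hy : y ∈ P), SP.Reachable ⟨x, hx⟩ ⟨y, hy⟩ := by
        intro x y hrt
        induction hrt with
        | refl => intro hx hy; exact SimpleGraph.Reachable.refl _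
        | tail hab hbc ih =>
          rename_i b c
          intro hx hy
          obtain ⟨hadjbc, hbP, hcP⟩ := hbc
          refine (ih hx hbP).trans ?_
          by_cases hbceq : b = c
          · subst hbceq
            exact SimpleGraph.Reachable.refl _
          · exact SimpleGraph.Adj.reachable ⟨by simpa using hbceq, hadjbc⟩
      have hnonempty : Nonempty ↥P := hne.to_subtype
      rw [SimpleGraph.connected_iff]
      refine ⟨?_, hnonempty⟩
      rintro ⟨x, hx⟩ ⟨y, hy⟩
      exact key x y (hconn.2 x hx y hy) hx hy
    have hcardP : Fintype.card ↥P = n := by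
      rw [← hnPf, hPfdef, Set.toFinset_card]
    obtain ⟨x₀, hx₀⟩ := hne
    set x₀v : ↥P := ⟨x₀, hx₀⟩ with hx₀v
    set p' : ↥P → ↥P := fun y =>
      if hy : y = x₀v then y else Classical.choose (aux_parent hSPconn x₀v y hy) with hp'
    have hp'adj : ∀ y, y ≠ x₀v → SP.Adj y (p' y) := by
      intro y hy
      rw [hp']
      simp only [dif_neg hy]
      exact (Classical.choose_spec (aux_parent hSPconn x₀v y hy)).1
    have hp'lt : ∀ y, y ≠ x₀v → SP.dist (p' y) x₀v < SP.dist y x₀v := by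
      intro y hy
      rw [hp']
      simp only [dif_neg hy]
      exact (Classical.choose_spec (aux_parent hSPconn x₀v y hy)).2
    set Dom : Finset (↥P × Bool) :=
      (Finset.univ.erase x₀v) ×ˢ (Finset.univ : Finset Bool) with hDom
    set F : ↥P × Bool → ((Fin d → ℤ) ⧸ Λ) × ((Fin d → ℤ) ⧸ Λ) := fun yb =>
      if yb.2 then ((yb.1 : (Fin d → ℤ) ⧸ Λ), (p' yb.1 : (Fin d → ℤ) ⧸ Λ))
      else ((p' yb.1 : (Fin d → ℤ) ⧸ Λ), (yb.1 : (Fin d → ℤ) ⧸ Λ)) with hF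
    have hDomcard : Dom.card = (n - 1) * 2 := by
      rw [hDom, Finset.card_product, Finset.card_erase_of_mem (Finset.mem_univ _)]
      simp [hcardP]
    have hmapsto : ∀ yb ∈ Dom, F yb ∈ I := by
      rintro ⟨y, s⟩ hyb
      have hyne : y ≠ x₀v := by
        rw [hDom] at hyb
        exact Finset.mem_erase.mp (Finset.mem_product.mp hyb).1 |>.1
      have hadjy := (hp'adj y hyne).2
      have hyP : (y : (Fin d → ℤ) ⧸ Λ) ∈ Pf := (hPf _).mpr y.2
      have hpP : ((p' y : ↥P) : (Fin d → ℤ) ⧸ Λ) ∈ Pf := (hPf _).mpr (p' y).2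
      rw [hIdef, hAdef]
      cases s <;> simp only [hF, if_true, if_false, Bool.false_eq_true] <;>
        rw [Finset.mem_filter, Finset.mem_filter] <;>
        refine ⟨⟨Finset.mem_univ _, ?_, ?_⟩, ?_⟩
      · exact hpP
      · exact hadj_symm _ _ hadjy
      · exact hyP
      · exact hyP
      · exact hadjy
      · exact hpP
    have hFinj : Set.InjOn F Dom := by
      rintro ⟨y, s⟩ hy ⟨y', s'⟩ hy' heq
      have hyne : y ≠ x₀v := by
        rw [hDom] at hy
        exact Finset.mem_erase.mp (Finset.mem_product.mp hy).1 |>.1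
      have hyne' : y' ≠ x₀v := by
        rw [hDom] at hy'
        exact Finset.mem_erase.mp (Finset.mem_product.mp hy').1 |>.1
      cases s <;> cases s' <;>
        simp only [hF, if_true, if_false, Bool.false_eq_true, Prod.mk.injEq] at heq
      · obtain ⟨h1, h2⟩ := heq
        rw [Subtype.coe_injective h2]
      · exfalso
        obtain ⟨h1, h2⟩ := heq
        have e1 : p' y = y' := Subtype.coe_injective h1
        have e2 : y = p' y' := Subtype.coe_injective h2
        have l1 := hp'lt y hyne
        have l2 := hp'lt y' hyne'
        rw [e1] at l1
        rw [← e2] at l2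
        omega
      · exfalso
        obtain ⟨h1, h2⟩ := heq
        have e1 : y = p' y' := Subtype.coe_injective h1
        have e2 : p' y = y' := Subtype.coe_injective h2
        have l1 := hp'lt y hyne
        have l2 := hp'lt y' hyne'
        rw [e2] at l1
        rw [← e1] at l2
        omega
      · obtain ⟨h1, h2⟩ := heq
        rw [Subtype.coe_injective h1]
    calc 2 * (n - 1) = Dom.card := by rw [hDomcard]; ring
      _ ≤ I.card := Finset.card_le_card_of_injOn F hmapsto hFinj
  -- holes lower bound on the boundary
  have hPc_ne : (Pᶜ).Nonempty := Set.nonempty_compl.mpr hprop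
  haveI hQtne : Nonempty (Quot fun a b : ↥(Pᶜ) => torusAdj d Λ a.1 b.1) :=
    ⟨Quot.mk _ ⟨hPc_ne.some, hPc_ne.some_mem⟩⟩
  haveI : Fintype (Quot fun a b : ↥(Pᶜ) => torusAdj d Λ a.1 b.1) := Fintype.ofFinite _
  have hcardQt : Fintype.card (Quot fun a b : ↥(Pᶜ) => torusAdj d Λ a.1 b.1) = h := by
    rw [← Nat.card_eq_fintype_card, hh]
  set f : ((Fin d → ℤ) ⧸ Λ) × ((Fin d → ℤ) ⧸ Λ) →
      Quot (fun a b : ↥(Pᶜ) => torusAdj d Λ a.1 b.1) := fun z =>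
    if hz : z.1 ∈ Pᶜ then Quot.mk _ ⟨z.1, hz⟩ else Classical.arbitrary _ with hf
  set B' : Finset (((Fin d → ℤ) ⧸ Λ) × ((Fin d → ℤ) ⧸ Λ)) :=
    Finset.univ.filter (fun z => z.1 ∉ Pf ∧ z.2 ∈ Pf ∧ torusAdj d Λ z.1 z.2) with hB'def
  have hBB' : B.card = B'.card := by
    refine Finset.card_bij' (fun z _ => (z.2, z.1)) (fun z _ => (z.2, z.1)) ?_ ?_ ?_ ?_
    · rintro ⟨a, b⟩ hz
      rw [hBdef, Finset.mem_filter, hAdef, Finset.mem_filter] at hz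
      obtain ⟨⟨_, haP, hadj⟩, hbP⟩ := hz
      rw [hB'def, Finset.mem_filter]
      exact ⟨Finset.mem_univ _, hbP, haP, hadj_symm _ _ hadj⟩
    · rintro ⟨a, b⟩ hz
      rw [hB'def, Finset.mem_filter] at hz
      obtain ⟨_, haP, hbP, hadj⟩ := hz
      rw [hBdef, Finset.mem_filter, hAdef, Finset.mem_filter]
      exact ⟨⟨Finset.mem_univ _, hbP, hadj_symm _ _ hadj⟩, haP⟩
    · intro z hz; rfl
    · intro z hz; rfl
  have hB'low : h * (2 * d) ≤ B'.card := by
    rw [Finset.card_eq_sum_card_fiberwise (f := f) (t := Finset.univ)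
      (fun z _ => Finset.mem_univ _)]
    have hfiber : ∀ c, 2 * d ≤ (B'.filter fun z => f z = c).card := by
      intro c
      set C : Finset ((Fin d → ℤ) ⧸ Λ) :=
        Finset.univ.filter (fun q => ∃ hq : q ∈ Pᶜ, Quot.mk _ (⟨q, hq⟩ : ↥(Pᶜ)) = c)
        with hCdef
      have hCmem : ∀ q, q ∈ C ↔ ∃ hq : q ∈ Pᶜ, Quot.mk _ (⟨q, hq⟩ : ↥(Pᶜ)) = c := by
        intro q
        rw [hCdef, Finset.mem_filter]
        simp
      have hCne : C.Nonempty := by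
        obtain ⟨⟨q₀, hq₀⟩, hrep⟩ := Quot.exists_rep c
        exact ⟨q₀, (hCmem q₀).mpr ⟨hq₀, hrep⟩⟩
      have hCuniv : C ≠ Finset.univ := by
        intro hcon
        obtain ⟨p₀, hp₀⟩ := hne
        have : p₀ ∈ C := hcon ▸ Finset.mem_univ p₀
        obtain ⟨hq, _⟩ := (hCmem p₀).mp this
        exact hq hp₀
      have hiso := aux_iso ε hgen hsv_inj C hCne hCuniv
      -- identify the sum with the cardinality of an edge finset
      set EC : Finset (((Fin d → ℤ) ⧸ Λ) × (Fin d × Bool)) :=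
        Finset.univ.filter (fun w => w.1 ∈ C ∧ w.1 + sv w.2 ∉ C) with hECdef
      have hECcard : EC.card = ∑ is : Fin d × Bool,
          (C.filter fun q => q + sv is ∉ C).card := by
        rw [Finset.card_eq_sum_card_fiberwise (f := fun w => w.2) (t := Finset.univ)
          (fun w _ => Finset.mem_univ _)]
        refine Finset.sum_congr rfl (fun is _ => ?_)
        refine Finset.card_bij' (fun w _ => w.1) (fun q _ => (q, is)) ?_ ?_ ?_ ?_
        · rintro ⟨q, is'⟩ hw
          rw [Finset.mem_filter, hECdef, Finset.mem_filter] at hw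
          obtain ⟨⟨_, hqC, hqs⟩, h2⟩ := hw
          simp only at h2
          subst h2
          exact Finset.mem_filter.mpr ⟨hqC, hqs⟩
        · intro q hq
          rw [Finset.mem_filter] at hq
          rw [Finset.mem_filter, hECdef, Finset.mem_filter]
          exact ⟨⟨Finset.mem_univ _, hq.1, hq.2⟩, rfl⟩
        · rintro ⟨q, is'⟩ hw
          rw [Finset.mem_filter] at hw
          have := hw.2
          simp only at this
          subst this
          rfl
        · intro q hq; rfl
      have hECle : EC.card ≤ (B'.filter fun z => f z = c).card := by
        apply Finset.card_le_card_of_injOn (fun w => (w.1, w.1 + sv w.2))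
        · rintro ⟨q, is⟩ hw
          rw [Finset.mem_coe, hECdef, Finset.mem_filter] at hw
          obtain ⟨_, hqC, hqs⟩ := hw
          obtain ⟨hqPc, hqc⟩ := (hCmem q).mp hqC
          have hadjq : torusAdj d Λ q (q + sv is) := (hadj_iff _ _).mpr ⟨is, rfl⟩
          have hinP : q + sv is ∈ P := by
            by_contra hcon
            have hPc2 : q + sv is ∈ Pᶜ := hcon
            apply hqs
            refine (hCmem _).mpr ⟨hPc2, ?_⟩
            have hsound : Quot.mk (fun a b : ↥(Pᶜ) => torusAdj d Λ a.1 b.1)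
                (⟨q, hqPc⟩ : ↥(Pᶜ)) = Quot.mk _ (⟨q + sv is, hPc2⟩ : ↥(Pᶜ)) :=
              Quot.sound hadjq
            rw [← hsound]
            exact hqc
          rw [Finset.mem_coe, Finset.mem_filter, hB'def, Finset.mem_filter]
          refine ⟨⟨Finset.mem_univ _, ?_, (hPf _).mpr hinP, hadjq⟩, ?_⟩
          · intro hcon
            exact hqPc ((hPf _).mp hcon)
          · rw [hf]
            simp only
            rw [dif_pos hqPc]
            exact hqc
        · rintro ⟨q, is⟩ hq ⟨q', is'⟩ hq' heq
          simp only [Prod.mk.injEq] at heq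
          obtain ⟨h1, h2⟩ := heq
          subst h1
          have := hsv_inj (add_left_cancel h2)
          rw [this]
      calc 2 * d ≤ ∑ is : Fin d × Bool, (C.filter fun q => q + sv is ∉ C).card := hiso
        _ = EC.card := hECcard.symm
        _ ≤ _ := hECle
    calc h * (2 * d) = ∑ _c : Quot (fun a b : ↥(Pᶜ) => torusAdj d Λ a.1 b.1), 2 * d := by
          rw [Finset.sum_const, smul_eq_mul, Finset.card_univ, hcardQt]
      _ ≤ _ := Finset.sum_le_sum (fun c _ => hfiber c)
  -- final arithmetic
  have hBlow : h * (2 * d) ≤ B.card := by rw [hBB']; exact hB'low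
  have key : 2 * (n - 1) + h * (2 * d) ≤ n * (2 * d) := by
    rw [← hcardA, ← hIB]
    omega
  have h5 : (d - 1) * n = d * n - n := by rw [Nat.sub_one_mul]
  have h6 : n ≤ d * n := Nat.le_mul_of_pos_left n (by omega)
  have key2 : 2 * (n - 1) + 2 * (d * h) ≤ 2 * (d * n) := by
    have e1 : h * (2 * d) = 2 * (d * h) := by ring
    have e2 : n * (2 * d) = 2 * (d * n) := by ring
    rw [e1, e2] at key
    exact key
  rw [h5]
  set a := d * h with ha
  set b := d * n with hb2
  omega
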